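/- Fix complex constants α0, α1 and t ∈ ℂ with t ≠ 0. The transition map r₁ : (x, y, z) ↦ (x₁, y₁, z₁) = (x, −(yz + (2(2α1−1)x + 2α0)/t²)·z, 1/z), defined on {(x,y,z) ∈ ℂ³ : z ≠ 0}, is differentiable and the determinant of its Jacobian matrix of partial derivatives with respect to (x, y, z) is identically equal to 1; in particular r₁ preserves the 3-form, dx₁ ∧ dy₁ ∧ dz₁ = dx ∧ dy ∧ dz. -/

import Mathlib

/-- First component of the transition map `r₁`. -/
noncomputable def r1f1 (α0 α1 t x y z : ℂ) : ℂ := x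

/-- Second component of the transition map `r₁`. -/
noncomputable def r1f2 (α0 α1 t x y z : ℂ) : ℂ :=
  -(y * z + (2 * (2 * α1 - 1) * x + 2 * α0) / t ^ 2) * z

/-- Third component of the transition map `r₁`. -/
noncomputable def r1f3 (α0 α1 t x y z : ℂ) : ℂ := 1 / z

/-- The transition map `r₁ : (x,y,z) ↦ (x, −(yz + (2(2α1−1)x + 2α0)/t²)z, 1/z)`
is differentiable on `{z ≠ 0}` and its Jacobian determinant is identically `1`;
in particular it preserves the 3-form `dx ∧ dy ∧ dz`. -/
theorem r1_preserves_three_form (α0 α1 t : ℂ) (ht : t ≠ 0) :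
    ∀ x y z : ℂ, z ≠ 0 →
      DifferentiableAt ℂ (fun P : ℂ × ℂ × ℂ =>
          (r1f1 α0 α1 t P.1 P.2.1 P.2.2,
           r1f2 α0 α1 t P.1 P.2.1 P.2.2,
           r1f3 α0 α1 t P.1 P.2.1 P.2.2)) (x, y, z) ∧
      Matrix.det
        !![deriv (fun s => r1f1 α0 α1 t s y z) x,
           deriv (fun s => r1f1 α0 α1 t x s z) y,
           deriv (fun s => r1f1 α0 α1 t x y s) z;
           deriv (fun s => r1f2 α0 α1 t s y z) x,
           deriv (fun s => r1f2 α0 α1 t x s z) y,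
           deriv (fun s => r1f2 α0 α1 t x y s) z;
           deriv (fun s => r1f3 α0 α1 t s y z) x,
           deriv (fun s => r1f3 α0 α1 t x s z) y,
           deriv (fun s => r1f3 α0 α1 t x y s) z] = 1 := by
  intro x y z hz
  constructor
  · simp only [r1f1, r1f2, r1f3, div_eq_mul_inv, one_div]
    have h2 : DifferentiableAt ℂ (fun P : ℂ × ℂ × ℂ => P.2.2) (x, y, z) :=
      differentiable_snd.snd.differentiableAt
    have h1 : DifferentiableAt ℂ (fun P : ℂ × ℂ × ℂ => P.1) (x, y, z) :=
      differentiable_fst.differentiableAt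
    have hy : DifferentiableAt ℂ (fun P : ℂ × ℂ × ℂ => P.2.1) (x, y, z) :=
      differentiable_snd.fst.differentiableAt
    refine DifferentiableAt.prodMk h1 (DifferentiableAt.prodMk ?_ ?_)
    · exact (((hy.mul h2).add ((((differentiableAt_const (2 * (2 * α1 - 1))).mul h1).add
        (differentiableAt_const (2 * α0))).mul (differentiableAt_const ((t ^ 2)⁻¹)))).neg).mul h2
    · exact (h2.inv hz).const_mul 1
  · have h11 : deriv (fun s => r1f1 α0 α1 t s y z) x = 1 := by
      simp [r1f1]
    have h12 : deriv (fun s => r1f1 α0 α1 t x s z) y = 0 := by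
      simp [r1f1]
    have h13 : deriv (fun s => r1f1 α0 α1 t x y s) z = 0 := by
      simp [r1f1]
    have e21 : (fun s => r1f2 α0 α1 t s y z)
        = fun s => (-(2 * (2 * α1 - 1)) / t ^ 2 * z) * s + (-(y * z) * z - 2 * α0 / t ^ 2 * z) := by
      funext s; simp only [r1f2]; field_simp; ring
    have h21 : deriv (fun s => r1f2 α0 α1 t s y z) x = -(2 * (2 * α1 - 1)) / t ^ 2 * z := by
      rw [e21]
      simpa using (((hasDerivAt_id x).const_mul (-(2 * (2 * α1 - 1)) / t ^ 2 * z)).add_const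
        (-(y * z) * z - 2 * α0 / t ^ 2 * z)).deriv
    have e22 : (fun s => r1f2 α0 α1 t x s z)
        = fun s => (-(z * z)) * s + (-((2 * (2 * α1 - 1) * x + 2 * α0) / t ^ 2) * z) := by
      funext s; simp only [r1f2]; ring
    have h22 : deriv (fun s => r1f2 α0 α1 t x s z) y = -(z * z) := by
      rw [e22]
      simpa using (((hasDerivAt_id y).const_mul (-(z * z))).add_const
        (-((2 * (2 * α1 - 1) * x + 2 * α0) / t ^ 2) * z)).deriv
    have e23 : (fun s => r1f2 α0 α1 t x y s)
        = fun s => (-y) * s ^ 2 + (-((2 * (2 * α1 - 1) * x + 2 * α0) / t ^ 2)) * s := by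
      funext s; simp only [r1f2]; ring
    have h23 : deriv (fun s => r1f2 α0 α1 t x y s) z
        = (-y) * (2 * z) + (-((2 * (2 * α1 - 1) * x + 2 * α0) / t ^ 2)) := by
      rw [e23]
      have := (((hasDerivAt_pow 2 z).const_mul (-y)).add
        ((hasDerivAt_id z).const_mul (-((2 * (2 * α1 - 1) * x + 2 * α0) / t ^ 2)))).deriv
      simp only [id] at this
      linear_combination this
    have h31 : deriv (fun s => r1f3 α0 α1 t s y z) x = 0 := by
      simp [r1f3]
    have h32 : deriv (fun s => r1f3 α0 α1 t x s z) y = 0 := by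
      simp [r1f3]
    have h33 : deriv (fun s => r1f3 α0 α1 t x y s) z = -(z ^ 2)⁻¹ := by
      simp only [r1f3, one_div]
      exact deriv_inv
    rw [h11, h12, h13, h21, h22, h23, h31, h32, h33, Matrix.det_fin_three]
    simp
    field_simp
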